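/- For all integers m, n ≥ 2 with n ≥ ⌊m/2⌋ + 1, the Cartesian product of a path and a complete graph satisfies γ_oir2(P_m □ K_n) = m(n−1). -/

import Mathlib

/-- `f` is an outer-independent 2-rainbow dominating function of `G`. -/
def IsOI2RD {V : Type*} (G : SimpleGraph V) (f : V → Finset (Fin 2)) : Prop :=
  (∀ v, f v = ∅ → ∀ c : Fin 2, ∃ u, G.Adj v u ∧ c ∈ f u) ∧
  (∀ u w, f u = ∅ → f w = ∅ → ¬ G.Adj u w)

/-- The outer-independent 2-rainbow domination number of `G`. -/
noncomputable def oir2 {V : Type*} [Fintype V] (G : SimpleGraph V) : ℕ :=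
  sInf {w | ∃ f : V → Finset (Fin 2), IsOI2RD G f ∧ w = ∑ v, (f v).card}

/-- For `m, n ≥ 2` with `n ≥ ⌊m/2⌋ + 1`, `γ_oir2(P_m □ K_n) = m(n-1)`. -/
theorem oir2_pathGraph_boxProd_complete (m n : ℕ) (hm : 2 ≤ m) (hn : 2 ≤ n)
    (hmn : m / 2 + 1 ≤ n) :
    oir2 (SimpleGraph.pathGraph m □ (⊤ : SimpleGraph (Fin n))) = m * (n - 1) := by
  classical
  open Fin.NatCast in
  set f : Fin m × Fin n → Finset (Fin 2) := fun p =>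
    if (p.2 : ℕ) = (p.1 : ℕ) % 2 then ∅ else {((p.1 : ℕ) : Fin 2)} with hf
  -- the constructed function is OI2RD
  have hdom : IsOI2RD (SimpleGraph.pathGraph m □ (⊤ : SimpleGraph (Fin n))) f := by
    constructor
    · rintro ⟨i, j⟩ hv c
      have hj : (j : ℕ) = (i : ℕ) % 2 := by
        by_contra h
        simp only [hf, if_neg h] at hv
        exact absurd hv (Finset.singleton_ne_empty _)
      by_cases hc : (c : ℕ) = (i : ℕ) % 2
      · -- use the other low row in the same column
        refine ⟨(i, ⟨1 - (i : ℕ) % 2, by omega⟩), ?_, ?_⟩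
        · rw [SimpleGraph.boxProd_adj]
          right
          refine ⟨(SimpleGraph.top_adj _ _).mpr ?_, rfl⟩
          intro hjj
          have := congrArg Fin.val hjj
          simp only [hj] at this
          omega
        · have hne : (1 - (i : ℕ) % 2) ≠ (i : ℕ) % 2 := by omega
          simp only [hf, if_neg hne, Finset.mem_singleton]
          apply Fin.ext
          rw [Fin.val_natCast]
          omega
      · -- use a path neighbour
        by_cases h : (i : ℕ) + 1 < m
        · refine ⟨(⟨(i : ℕ) + 1, h⟩, j), ?_, ?_⟩
          · rw [SimpleGraph.boxProd_adj]
            left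
            exact ⟨SimpleGraph.pathGraph_adj.mpr (Or.inl rfl), rfl⟩
          · have hne : (j : ℕ) ≠ ((i : ℕ) + 1) % 2 := by omega
            simp only [hf, if_neg hne, Finset.mem_singleton]
            apply Fin.ext
            rw [Fin.val_natCast]
            have := c.isLt
            omega
        · have hi1 : 1 ≤ (i : ℕ) := by have := i.isLt; omega
          refine ⟨(⟨(i : ℕ) - 1, by omega⟩, j), ?_, ?_⟩
          · rw [SimpleGraph.boxProd_adj]
            left
            refine ⟨SimpleGraph.pathGraph_adj.mpr (Or.inr ?_), rfl⟩
            simp only []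
            omega
          · have hne : (j : ℕ) ≠ ((i : ℕ) - 1) % 2 := by omega
            simp only [hf, if_neg hne, Finset.mem_singleton]
            apply Fin.ext
            rw [Fin.val_natCast]
            have := c.isLt
            omega
    · rintro ⟨i, j⟩ ⟨i', j'⟩ hu hw hadj
      have hj : (j : ℕ) = (i : ℕ) % 2 := by
        by_contra h
        simp only [hf, if_neg h] at hu
        exact absurd hu (Finset.singleton_ne_empty _)
      have hj' : (j' : ℕ) = (i' : ℕ) % 2 := by
        by_contra h
        simp only [hf, if_neg h] at hw
        exact absurd hw (Finset.singleton_ne_empty _)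
      rw [SimpleGraph.boxProd_adj] at hadj
      rcases hadj with ⟨hpa, hj2⟩ | ⟨hka, hi2⟩
      · have hpa' : (i : ℕ) + 1 = (i' : ℕ) ∨ (i' : ℕ) + 1 = (i : ℕ) :=
          SimpleGraph.pathGraph_adj.mp hpa
        have hj2' : (j : ℕ) = (j' : ℕ) := congrArg Fin.val hj2
        omega
      · apply (SimpleGraph.top_adj (j : Fin n) j').mp hka
        have hi2' : (i : ℕ) = (i' : ℕ) := congrArg Fin.val hi2
        apply Fin.ext
        omega
  -- its weight is m * (n - 1)
  have hsum : ∑ v, (f v).card = m * (n - 1) := by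
    rw [Fintype.sum_prod_type]
    have hcol : ∀ i : Fin m, ∑ j : Fin n, (f (i, j)).card = n - 1 := by
      intro i
      have he : ∀ j : Fin n, ((j : ℕ) = (i : ℕ) % 2) ↔ j = ⟨(i : ℕ) % 2, by omega⟩ := by
        intro j
        constructor
        · intro h; exact Fin.ext h
        · intro h; rw [h]
      have : ∀ j : Fin n, (f (i, j)).card =
          if j = (⟨(i : ℕ) % 2, by omega⟩ : Fin n) then 0 else 1 := by
        intro j
        simp only [hf, he j]
        split_ifs <;> simp
      rw [Finset.sum_congr rfl (fun j _ => this j)]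
      rw [Finset.sum_ite, Finset.filter_ne', Finset.sum_const, Finset.sum_const,
        Finset.card_erase_of_mem (Finset.mem_univ _), Finset.card_univ, Fintype.card_fin]
      simp
    rw [Finset.sum_congr rfl (fun i _ => hcol i), Finset.sum_const, Finset.card_univ,
      Fintype.card_fin, smul_eq_mul]
  -- lower bound
  have hlb : ∀ w ∈ {w | ∃ g : Fin m × Fin n → Finset (Fin 2),
      IsOI2RD (SimpleGraph.pathGraph m □ (⊤ : SimpleGraph (Fin n))) g ∧
      w = ∑ v, (g v).card}, m * (n - 1) ≤ w := by
    rintro w ⟨g, ⟨hg1, hg2⟩, rfl⟩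
    rw [Fintype.sum_prod_type]
    have hcol : ∀ i : Fin m, n - 1 ≤ ∑ j : Fin n, (g (i, j)).card := by
      intro i
      set E : Finset (Fin n) := Finset.univ.filter (fun j => g (i, j) = ∅) with hE
      have hE1 : E.card ≤ 1 := by
        rw [Finset.card_le_one]
        intro a ha b hb
        by_contra hab
        simp only [hE, Finset.mem_filter] at ha hb
        exact hg2 (i, a) (i, b) ha.2 hb.2
          (SimpleGraph.boxProd_adj.mpr (Or.inr ⟨(SimpleGraph.top_adj _ _).mpr hab, rfl⟩))
      calc n - 1 ≤ (Finset.univ \ E).card := by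
              rw [Finset.card_sdiff_of_subset (Finset.subset_univ _), Finset.card_univ, Fintype.card_fin]
              omega
        _ = ∑ j ∈ Finset.univ \ E, 1 := by rw [Finset.sum_const, smul_eq_mul, mul_one]
        _ ≤ ∑ j ∈ Finset.univ \ E, (g (i, j)).card := by
              apply Finset.sum_le_sum
              intro j hjmem
              simp only [hE, Finset.mem_sdiff, Finset.mem_filter, Finset.mem_univ,
                true_and] at hjmem
              exact Finset.card_pos.mpr (Finset.nonempty_iff_ne_empty.mpr hjmem)
        _ ≤ ∑ j : Fin n, (g (i, j)).card :=
              Finset.sum_le_sum_of_subset (Finset.sdiff_subset)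
    calc m * (n - 1) = ∑ _i : Fin m, (n - 1) := by
            rw [Finset.sum_const, Finset.card_univ, Fintype.card_fin, smul_eq_mul]
      _ ≤ ∑ i : Fin m, ∑ j : Fin n, (g (i, j)).card := Finset.sum_le_sum (fun i _ => hcol i)
  refine le_antisymm (Nat.sInf_le ⟨f, hdom, hsum.symm⟩) (le_csInf ⟨_, ⟨f, hdom, hsum.symm⟩⟩ hlb)
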